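/- Every separable two-qubit state ρ satisfies A_2(ρ) ≤ 1; consequently, any two-qubit state with A_2 > 1 is entangled. -/

import Mathlib

open Matrix BigOperators Finset ComplexOrder

/-- The Pauli matrices, indexed by `Fin 4`: identity, X, Y, Z. -/
noncomputable def pauli : Fin 4 → Matrix (Fin 2) (Fin 2) ℂ
  | 0 => 1
  | 1 => !![0, 1; 1, 0]
  | 2 => !![0, -Complex.I; Complex.I, 0]
  | 3 => !![1, 0; 0, -1]

/-- An `n`-qubit Pauli word: the tensor product of the Pauli matrices `pauli (w i)`,
realized as a matrix indexed by `Fin n → Fin 2`. -/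
noncomputable def pWord {n : ℕ} (w : Fin n → Fin 4) :
    Matrix (Fin n → Fin 2) (Fin n → Fin 2) ℂ :=
  Matrix.of fun x y => ∏ i, pauli (w i) (x i) (y i)

/-- The weight of a Pauli word: the number of non-identity tensor factors. -/
def wt {n : ℕ} (w : Fin n → Fin 4) : ℕ :=
  (Finset.univ.filter fun i => w i ≠ 0).card

/-- The `k`-th sector length of an `n`-qubit matrix:
the sum of squared Pauli expectation values over Pauli words of weight `k`. -/
noncomputable def sector (n k : ℕ) (ρ : Matrix (Fin n → Fin 2) (Fin n → Fin 2) ℂ) : ℝ :=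
  ∑ w ∈ Finset.univ.filter fun w : Fin n → Fin 4 => wt w = k,
    ((pWord w * ρ).trace.re) ^ 2

/-- An `n`-qubit quantum state: positive semidefinite with unit trace. -/
def IsState {n : ℕ} (ρ : Matrix (Fin n → Fin 2) (Fin n → Fin 2) ℂ) : Prop :=
  ρ.PosSemidef ∧ ρ.trace = 1

/-- The tensor product of two single-qubit matrices as a two-qubit matrix. -/
noncomputable def kron2 (A B : Matrix (Fin 2) (Fin 2) ℂ) :
    Matrix (Fin 2 → Fin 2) (Fin 2 → Fin 2) ℂ :=
  Matrix.of fun x y => A (x 0) (y 0) * B (x 1) (y 1)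

/-- A two-qubit state is separable iff it is a convex combination of product states. -/
def Separable2 (ρ : Matrix (Fin 2 → Fin 2) (Fin 2 → Fin 2) ℂ) : Prop :=
  ∃ (m : ℕ) (p : Fin m → ℝ) (a b : Fin m → Matrix (Fin 2) (Fin 2) ℂ),
    (∀ i, 0 ≤ p i) ∧ (∑ i, p i = 1) ∧
    (∀ i, (a i).PosSemidef ∧ (a i).trace = 1) ∧
    (∀ i, (b i).PosSemidef ∧ (b i).trace = 1) ∧
    ρ = ∑ i, (p i : ℂ) • kron2 (a i) (b i)

/-! ### Auxiliary lemmas -/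

lemma pauli_herm (k : Fin 4) : (pauli k)ᴴ = pauli k := by
  fin_cases k <;>
  · ext i j
    fin_cases i <;> fin_cases j <;>
      simp [pauli, Matrix.conjTranspose_apply, Complex.ext_iff]

lemma trace_pauli_im (k : Fin 4) (σ : Matrix (Fin 2) (Fin 2) ℂ) (h : σ.IsHermitian) :
    ((pauli k * σ).trace).im = 0 := by
  have hs : (starRingEnd ℂ) ((pauli k * σ).trace) = (pauli k * σ).trace := by
    have : (pauli k * σ)ᴴ.trace = star ((pauli k * σ).trace) :=
      Matrix.trace_conjTranspose _
    rw [Matrix.conjTranspose_mul, h.eq, pauli_herm, Matrix.trace_mul_comm] at this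
    exact this.symm
  exact Complex.conj_eq_iff_im.mp hs

lemma sum_fn22 (f : (Fin 2 → Fin 2) → ℂ) : ∑ x, f x = ∑ a : Fin 2, ∑ b : Fin 2, f ![a, b] := by
  rw [← Equiv.sum_comp (finTwoArrowEquiv (Fin 2)).symm, Fintype.sum_prod_type]
  rfl

lemma trace_kron (w : Fin 2 → Fin 4) (A B : Matrix (Fin 2) (Fin 2) ℂ) :
    (pWord w * kron2 A B).trace = (pauli (w 0) * A).trace * (pauli (w 1) * B).trace := by
  simp only [Matrix.trace, Matrix.diag, Matrix.mul_apply, pWord, kron2, Matrix.of_apply,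
    Fin.prod_univ_two]
  simp only [sum_fn22]
  simp only [Fin.sum_univ_two, Matrix.cons_val_zero, Matrix.cons_val_one, Matrix.head_cons]
  ring

/-- Single-qubit sector bound: determinant nonnegativity from PSD. -/
lemma det_key (σ : Matrix (Fin 2) (Fin 2) ℂ) (h : σ.PosSemidef) (ht : σ.trace = 1) :
    (σ 0 1).re ^ 2 + (σ 0 1).im ^ 2 ≤ (σ 0 0).re * (σ 1 1).re := by
  have hH := h.1
  have h10 : σ 1 0 = star (σ 0 1) := by
    have := congrFun (congrFun hH.eq 1) 0
    simpa [Matrix.conjTranspose_apply] using this.symm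
  have h00 : (σ 0 0).im = 0 := by
    have := congrFun (congrFun hH.eq 0) 0
    simpa [Matrix.conjTranspose_apply, Complex.ext_iff] using
      (Complex.conj_eq_iff_im.mp (by simpa [Matrix.conjTranspose_apply] using this))
  have h11 : (σ 1 1).im = 0 := by
    have := congrFun (congrFun hH.eq 1) 1
    simpa [Matrix.conjTranspose_apply, Complex.ext_iff] using
      (Complex.conj_eq_iff_im.mp (by simpa [Matrix.conjTranspose_apply] using this))
  have htr : (σ 0 0).re + (σ 1 1).re = 1 := by
    have : (σ.trace).re = 1 := by rw [ht]; simp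
    simpa [Matrix.trace, Matrix.diag, Fin.sum_univ_two] using this
  -- first quadratic form: x = ![σ 0 1, -σ 0 0]
  have q1 := h.dotProduct_mulVec_nonneg ![σ 0 1, -(σ 0 0)]
  have q2 := h.dotProduct_mulVec_nonneg ![-(σ 1 1), σ 1 0]
  rw [Complex.le_def] at q1 q2
  have e1 : 0 ≤ (star ![σ 0 1, -(σ 0 0)] ⬝ᵥ σ.mulVec ![σ 0 1, -(σ 0 0)]).re := q1.1
  have e2 : 0 ≤ (star ![-(σ 1 1), σ 1 0] ⬝ᵥ σ.mulVec ![-(σ 1 1), σ 1 0]).re := q2.1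
  simp only [dotProduct, Matrix.mulVec, Fin.sum_univ_two, Pi.star_apply,
    Matrix.cons_val_zero, Matrix.cons_val_one, Matrix.head_cons, h10] at e1 e2
  simp only [Complex.add_re, Complex.add_im, Complex.mul_re, Complex.mul_im, Complex.neg_re,
    Complex.neg_im, Complex.star_def, Complex.conj_re, Complex.conj_im, h00, h11] at e1 e2
  ring_nf at e1 e2
  nlinarith [e1, e2, htr, sq_nonneg ((σ 0 1).re), sq_nonneg ((σ 0 1).im)]

lemma A1_bound (σ : Matrix (Fin 2) (Fin 2) ℂ) (h : σ.PosSemidef) (ht : σ.trace = 1) :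
    ∑ k ∈ Finset.univ.filter (fun k : Fin 4 => k ≠ 0), ((pauli k * σ).trace).re ^ 2 ≤ 1 := by
  have hH := h.1
  have h10 : σ 1 0 = star (σ 0 1) := by
    have := congrFun (congrFun hH.eq 1) 0
    simpa [Matrix.conjTranspose_apply] using this.symm
  have htr : (σ 0 0).re + (σ 1 1).re = 1 := by
    have : (σ.trace).re = 1 := by rw [ht]; simp
    simpa [Matrix.trace, Matrix.diag, Fin.sum_univ_two] using this
  have hkey := det_key σ h ht
  have hfil : (Finset.univ.filter (fun k : Fin 4 => k ≠ 0)) = {1, 2, 3} := by decide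
  rw [hfil]
  have t1 : ((pauli 1 * σ).trace).re = 2 * (σ 0 1).re := by
    simp [pauli, Matrix.trace, Matrix.diag, Matrix.mul_apply, Fin.sum_univ_two, h10,
      Complex.add_re]
    ring
  have t2 : ((pauli 2 * σ).trace).re = -(2 * (σ 0 1).im) := by
    simp [pauli, Matrix.trace, Matrix.diag, Matrix.mul_apply, Fin.sum_univ_two, h10,
      Complex.add_re, Complex.mul_re]
    ring
  have t3 : ((pauli 3 * σ).trace).re = (σ 0 0).re - (σ 1 1).re := by
    simp [pauli, Matrix.trace, Matrix.diag, Matrix.mul_apply, Fin.sum_univ_two, Complex.add_re,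
      sub_eq_add_neg]
  rw [Finset.sum_insert (by decide), Finset.sum_insert (by decide), Finset.sum_singleton,
    t1, t2, t3]
  nlinarith

lemma jensen_sq {m : ℕ} (p x : Fin m → ℝ) (hp : ∀ i, 0 ≤ p i) (hs : ∑ i, p i = 1) :
    (∑ i, p i * x i) ^ 2 ≤ ∑ i, p i * (x i) ^ 2 := by
  have := Finset.sum_mul_sq_le_sq_mul_sq Finset.univ (fun i => Real.sqrt (p i))
    (fun i => Real.sqrt (p i) * x i)
  have h1 : ∀ i : Fin m, Real.sqrt (p i) * (Real.sqrt (p i) * x i) = p i * x i := by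
    intro i; rw [← mul_assoc, Real.mul_self_sqrt (hp i)]
  have h2 : ∀ i : Fin m, Real.sqrt (p i) ^ 2 = p i := fun i => Real.sq_sqrt (hp i)
  have h3 : ∀ i : Fin m, (Real.sqrt (p i) * x i) ^ 2 = p i * x i ^ 2 := by
    intro i; rw [mul_pow, h2]
  simp only [h1, h2, h3, hs, one_mul] at this
  exact this

lemma sum_wt2 (F : Fin 4 → Fin 4 → ℝ) :
    ∑ w ∈ Finset.univ.filter (fun w : Fin 2 → Fin 4 => wt w = 2), F (w 0) (w 1)
      = ∑ k ∈ Finset.univ.filter (fun k : Fin 4 => k ≠ 0),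
          ∑ l ∈ Finset.univ.filter (fun l : Fin 4 => l ≠ 0), F k l := by
  have hw : ∀ w : Fin 2 → Fin 4, wt w = 2 ↔ w 0 ≠ 0 ∧ w 1 ≠ 0 := by decide
  rw [Finset.sum_filter]
  rw [Fintype.sum_equiv (finTwoArrowEquiv (Fin 4))
    (fun w => if wt w = 2 then F (w 0) (w 1) else 0)
    (fun q : Fin 4 × Fin 4 => if q.1 ≠ 0 ∧ q.2 ≠ 0 then F q.1 q.2 else 0)
    (fun w => by simp [finTwoArrowEquiv, piFinTwoEquiv, hw w])]
  rw [Fintype.sum_prod_type]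
  rw [Finset.sum_filter]
  refine Finset.sum_congr rfl fun k _ => ?_
  by_cases hk : k = 0
  · simp [hk]
  · simp [hk, Finset.sum_filter]

/-- Every separable two-qubit state satisfies `A₂(ρ) ≤ 1`; consequently,
any two-qubit state with `A₂(ρ) > 1` is entangled. -/
theorem separable_A2_le_one (ρ : Matrix (Fin 2 → Fin 2) (Fin 2 → Fin 2) ℂ)
    (hρ : IsState ρ) :
    (Separable2 ρ → sector 2 2 ρ ≤ 1) ∧ (1 < sector 2 2 ρ → ¬ Separable2 ρ) := by
  have main : Separable2 ρ → sector 2 2 ρ ≤ 1 := by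
    rintro ⟨m, p, a, b, hp, hps, ha, hb, rfl⟩
    set c : Fin m → Fin 4 → ℝ := fun i k => ((pauli k * a i).trace).re with hc
    set d : Fin m → Fin 4 → ℝ := fun i k => ((pauli k * b i).trace).re with hd
    have hre : ∀ w : Fin 2 → Fin 4,
        ((pWord w * ∑ i, (p i : ℂ) • kron2 (a i) (b i)).trace).re
          = ∑ i, p i * (c i (w 0) * d i (w 1)) := by
      intro w
      rw [Matrix.mul_sum, Matrix.trace_sum, Complex.re_sum]
      refine Finset.sum_congr rfl fun i _ => ?_
      rw [Matrix.mul_smul, Matrix.trace_smul]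
      have : ((p i : ℂ) • (pWord w * kron2 (a i) (b i)).trace).re
          = p i * ((pWord w * kron2 (a i) (b i)).trace).re := by
        simp [Complex.smul_re]
      rw [this, trace_kron]
      have hima : ((pauli (w 0) * a i).trace).im = 0 := trace_pauli_im _ _ (ha i).1.1
      rw [Complex.mul_re, hima]
      simp only [hc, hd, zero_mul, mul_zero, sub_zero]
    unfold sector
    calc ∑ w ∈ Finset.univ.filter (fun w : Fin 2 → Fin 4 => wt w = 2),
          ((pWord w * ∑ i, (p i : ℂ) • kron2 (a i) (b i)).trace.re) ^ 2
        = ∑ w ∈ Finset.univ.filter (fun w : Fin 2 → Fin 4 => wt w = 2),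
            (∑ i, p i * (c i (w 0) * d i (w 1))) ^ 2 := by
          refine Finset.sum_congr rfl fun w _ => ?_; rw [hre w]
      _ ≤ ∑ w ∈ Finset.univ.filter (fun w : Fin 2 → Fin 4 => wt w = 2),
            ∑ i, p i * (c i (w 0) * d i (w 1)) ^ 2 := by
          refine Finset.sum_le_sum fun w _ => ?_
          exact jensen_sq p _ hp hps
      _ = ∑ i, ∑ w ∈ Finset.univ.filter (fun w : Fin 2 → Fin 4 => wt w = 2),
            p i * (c i (w 0) * d i (w 1)) ^ 2 := Finset.sum_comm
      _ ≤ ∑ i, p i := by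
          refine Finset.sum_le_sum fun i _ => ?_
          have : ∑ w ∈ Finset.univ.filter (fun w : Fin 2 → Fin 4 => wt w = 2),
              p i * (c i (w 0) * d i (w 1)) ^ 2
              = p i * ((∑ k ∈ Finset.univ.filter (fun k : Fin 4 => k ≠ 0), (c i k) ^ 2)
                  * (∑ l ∈ Finset.univ.filter (fun l : Fin 4 => l ≠ 0), (d i l) ^ 2)) := by
            rw [← Finset.mul_sum]
            congr 1
            rw [Finset.sum_mul_sum]
            rw [sum_wt2 (fun k l => (c i k * d i l) ^ 2)]
            refine Finset.sum_congr rfl fun k _ => Finset.sum_congr rfl fun l _ => ?_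
            ring
          rw [this]
          have hca := A1_bound (a i) (ha i).1 (ha i).2
          have hcb := A1_bound (b i) (hb i).1 (hb i).2
          have hcnn : 0 ≤ ∑ k ∈ Finset.univ.filter (fun k : Fin 4 => k ≠ 0), (c i k) ^ 2 :=
            Finset.sum_nonneg fun _ _ => sq_nonneg _
          have hdnn : 0 ≤ ∑ l ∈ Finset.univ.filter (fun l : Fin 4 => l ≠ 0), (d i l) ^ 2 :=
            Finset.sum_nonneg fun _ _ => sq_nonneg _
          have hmul : (∑ k ∈ Finset.univ.filter (fun k : Fin 4 => k ≠ 0), (c i k) ^ 2)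
              * (∑ l ∈ Finset.univ.filter (fun l : Fin 4 => l ≠ 0), (d i l) ^ 2) ≤ 1 := by
            calc (∑ k ∈ Finset.univ.filter (fun k : Fin 4 => k ≠ 0), (c i k) ^ 2)
                * (∑ l ∈ Finset.univ.filter (fun l : Fin 4 => l ≠ 0), (d i l) ^ 2)
                ≤ 1 * (∑ l ∈ Finset.univ.filter (fun l : Fin 4 => l ≠ 0), (d i l) ^ 2) :=
                  mul_le_mul_of_nonneg_right hca hdnn
              _ ≤ 1 * 1 := mul_le_mul_of_nonneg_left hcb (by norm_num)
              _ = 1 := by norm_num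
          calc p i * ((∑ k ∈ Finset.univ.filter (fun k : Fin 4 => k ≠ 0), (c i k) ^ 2)
                * (∑ l ∈ Finset.univ.filter (fun l : Fin 4 => l ≠ 0), (d i l) ^ 2))
              ≤ p i * 1 := mul_le_mul_of_nonneg_left hmul (hp i)
            _ = p i := mul_one _
      _ = 1 := hps
  exact ⟨main, fun h hsep => absurd (main hsep) (not_le.mpr h)⟩
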